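/- (Theorem 7.1.) Let p > 0 and let h : (0,∞) → ℝ be C², nonnegative, decreasing and convex, such that y h''(y) + h'(y) ≥ 0 for all y > 0 and the function y ↦ y² h''(y) is decreasing. Fix t > 0 and y > 0. For a continuous function v : [0,t] → (0,∞) define z(s) = e^{(t−s)/p} y + ∫_s^t e^{(s'−s)/p} v(s') ds' for 0 ≤ s ≤ t, and F(t, y, v) = (1/p) ∫_0^t h(z(s)/v(s)) e^{−(t−s)/p} v(s) ds − (1 + y/p) ∫_0^t h'(z(s)/v(s)) ds. Then: (i) if 0 < v(s) ≤ 1 for all s ∈ [0,t], then F(t, y, v) ≤ F(t, y, 1), where 1 denotes the constant function equal to 1; (ii) if v(s) ≥ 1 for all s ∈ [0,t], then F(t, y, v) ≥ F(t, y, 1). That is, the maximum of F(t,y,·) over {0 < v ≤ 1} and the minimum of F(t,y,·) over {v ≥ 1} are both attained at v ≡ 1. -/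

import Mathlib

open MeasureTheory Real Filter Set

/-- The trajectory z(s) = e^{(t−s)/p} y + ∫_s^t e^{(s'−s)/p} v(s') ds'. -/
noncomputable def traj (p y t : ℝ) (v : ℝ → ℝ) (s : ℝ) : ℝ :=
  Real.exp ((t - s) / p) * y + ∫ s' in s..t, Real.exp ((s' - s) / p) * v s'

/-- The functional F(t,y,v) = (1/p)∫_0^t h(z(s)/v(s)) e^{−(t−s)/p} v(s) ds
− (1 + y/p)∫_0^t h'(z(s)/v(s)) ds (Bochner form, used for controls 0 < v ≤ 1). -/
noncomputable def Ffun (p : ℝ) (h : ℝ → ℝ) (t y : ℝ) (v : ℝ → ℝ) : ℝ :=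
  (1 / p) * (∫ s in (0:ℝ)..t, h (traj p y t v s / v s) * Real.exp (-(t - s) / p) * v s)
    - (1 + y / p) * ∫ s in (0:ℝ)..t, deriv h (traj p y t v s / v s)

/-- The functional F(t,y,v) written as a sum of two nonnegative lower Lebesgue
integrals, with values in [0,∞] (used for controls v ≥ 1, where the integrals may
be infinite): F = (1/p)∫_0^t h(z/v) e^{−(t−s)/p} v + (1 + y/p)∫_0^t (−h'(z/v)). -/
noncomputable def FfunL (p : ℝ) (h : ℝ → ℝ) (t y : ℝ) (v : ℝ → ℝ) : ENNReal :=
  ENNReal.ofReal (1 / p)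
      * (∫⁻ s in Set.Ioc (0:ℝ) t,
          ENNReal.ofReal (h (traj p y t v s / v s) * Real.exp (-(t - s) / p) * v s))
    + ENNReal.ofReal (1 + y / p)
      * ∫⁻ s in Set.Ioc (0:ℝ) t, ENNReal.ofReal (-(deriv h (traj p y t v s / v s)))

open Topology

section HInfra
variable {h : ℝ → ℝ}

lemma h_hasDeriv (hh2 : ContDiffOn ℝ 2 h (Set.Ioi 0)) {x : ℝ} (hx : 0 < x) :
    HasDerivAt h (deriv h x) x :=
  ((hh2.differentiableOn (by norm_num)).differentiableAt (Ioi_mem_nhds hx)).hasDerivAt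

lemma hd_cont (hh2 : ContDiffOn ℝ 2 h (Set.Ioi 0)) :
    ContinuousOn (deriv h) (Set.Ioi 0) :=
  hh2.continuousOn_deriv_of_isOpen isOpen_Ioi (by norm_num)

lemma hd_hasDeriv (hh2 : ContDiffOn ℝ 2 h (Set.Ioi 0)) {x : ℝ} (hx : 0 < x) :
    HasDerivAt (deriv h) (deriv (deriv h) x) x :=
  (((hh2.deriv_of_isOpen (m := 1) isOpen_Ioi (by norm_num)).differentiableOn
    (by norm_num)).differentiableAt (Ioi_mem_nhds hx)).hasDerivAt

lemma hd_nonpos (hh2 : ContDiffOn ℝ 2 h (Set.Ioi 0)) (hhdec : AntitoneOn h (Set.Ioi 0))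
    {x : ℝ} (hx : 0 < x) : deriv h x ≤ 0 := by
  have hd := (h_hasDeriv hh2 hx)
  have h1 : Tendsto (slope h x) (𝓝[>] x) (𝓝 (deriv h x)) :=
    (hasDerivAt_iff_tendsto_slope.mp hd).mono_left
      (nhdsWithin_mono x fun y hy => ne_of_gt hy)
  refine le_of_tendsto h1 ?_
  filter_upwards [self_mem_nhdsWithin] with z hz
  have hz' : x < z := hz
  have : h z ≤ h x := hhdec hx (lt_trans hx hz') hz'.le
  rw [slope_def_field]
  exact div_nonpos_iff.mpr (Or.inr ⟨by linarith, by linarith⟩)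

lemma hd_mono (hh2 : ContDiffOn ℝ 2 h (Set.Ioi 0)) (hhconv : ConvexOn ℝ (Set.Ioi 0) h) :
    MonotoneOn (deriv h) (Set.Ioi 0) :=
  hhconv.monotoneOn_deriv fun x hx =>
    (hh2.differentiableOn (by norm_num)).differentiableAt (Ioi_mem_nhds hx)

lemma xdh_mono (hh2 : ContDiffOn ℝ 2 h (Set.Ioi 0))
    (hineq : ∀ z > (0:ℝ), 0 ≤ z * iteratedDeriv 2 h z + deriv h z) :
    MonotoneOn (fun x => x * deriv h x) (Set.Ioi 0) := by
  have hder : ∀ x ∈ Set.Ioi (0:ℝ), HasDerivAt (fun x => x * deriv h x)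
      (deriv h x + x * deriv (deriv h) x) x := by
    intro x hx
    have := (hasDerivAt_id' x).mul (hd_hasDeriv hh2 hx)
    exact this.congr_deriv (by ring)
  have hint : interior (Set.Ioi (0:ℝ)) = Set.Ioi 0 := interior_Ioi
  refine monotoneOn_of_deriv_nonneg (convex_Ioi 0) ?_ ?_ ?_
  · intro x hx; exact ((hder x hx).continuousAt).continuousWithinAt
  · rw [hint]; intro x hx; exact (hder x hx).differentiableAt.differentiableWithinAt
  · rw [hint]; intro x hx
    rw [(hder x hx).deriv]
    have := hineq x hx
    have h2 : iteratedDeriv 2 h x = deriv (deriv h) x := by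
      simp [iteratedDeriv_succ, iteratedDeriv_one]
    rw [h2] at this; linarith

end HInfra

section TrajInfra
variable {p t y : ℝ} {v : ℝ → ℝ}

lemma traj_eq (p y t : ℝ) (v : ℝ → ℝ) (σ : ℝ) :
    traj p y t v σ
      = Real.exp (-σ/p) * (Real.exp (t/p) * y + ∫ s' in σ..t, Real.exp (s'/p) * v s') := by
  unfold traj
  have h1 : (t - σ)/p = -σ/p + t/p := by ring
  have h2 : ∀ s' : ℝ, (s' - σ)/p = -σ/p + s'/p := fun s' => by ring
  rw [h1, Real.exp_add]
  have h3 : (∫ s' in σ..t, Real.exp ((s' - σ)/p) * v s')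
      = ∫ s' in σ..t, Real.exp (-σ/p) * (Real.exp (s'/p) * v s') := by
    apply intervalIntegral.integral_congr; intro s' _
    dsimp only
    rw [h2 s', Real.exp_add]; ring
  rw [h3, intervalIntegral.integral_const_mul]; ring

lemma g0_cont (hv : ContinuousOn v (Set.Icc 0 t)) :
    ContinuousOn (fun s' => Real.exp (s'/p) * v s') (Set.Icc 0 t) :=
  ((Real.continuous_exp.comp (continuous_id.div_const p)).continuousOn).mul hv

lemma g0_ii (hv : ContinuousOn v (Set.Icc 0 t)) {a b : ℝ}
    (hab : Set.uIcc a b ⊆ Set.Icc 0 t) :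
    IntervalIntegrable (fun s' => Real.exp (s'/p) * v s') volume a b :=
  ((g0_cont hv).mono hab).intervalIntegrable

lemma traj_sub (ht : 0 ≤ t) (hv : ContinuousOn v (Set.Icc 0 t)) {σ : ℝ}
    (hσ : σ ∈ Set.Icc 0 t) :
    traj p y t v σ = Real.exp (-σ/p) *
      ((Real.exp (t/p) * y + ∫ s' in (0:ℝ)..t, Real.exp (s'/p) * v s')
        - ∫ s' in (0:ℝ)..σ, Real.exp (s'/p) * v s') := by
  rw [traj_eq]
  have h1 : ((∫ s' in (0:ℝ)..t, Real.exp (s'/p) * v s')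
      - ∫ s' in (0:ℝ)..σ, Real.exp (s'/p) * v s')
      = ∫ s' in σ..t, Real.exp (s'/p) * v s' := by
    have i1 : IntervalIntegrable (fun s' => Real.exp (s'/p) * v s') volume 0 t :=
      g0_ii hv (by rw [Set.uIcc_of_le ht])
    have i2 : IntervalIntegrable (fun s' => Real.exp (s'/p) * v s') volume 0 σ :=
      g0_ii hv (by rw [Set.uIcc_of_le hσ.1]; exact Set.Icc_subset_Icc_right hσ.2)
    exact intervalIntegral.integral_interval_sub_left i1 i2
  rw [← h1]; ring

lemma traj_contOn (ht : 0 ≤ t) (hv : ContinuousOn v (Set.Icc 0 t)) :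
    ContinuousOn (traj p y t v) (Set.Icc 0 t) := by
  have hint : IntegrableOn (fun s' => Real.exp (s'/p) * v s') (Set.Icc 0 t) volume :=
    (g0_cont hv).integrableOn_Icc
  have hprim : ContinuousOn (fun σ => ∫ s' in (0:ℝ)..σ, Real.exp (s'/p) * v s')
      (Set.Icc 0 t) := by
    have := intervalIntegral.continuousOn_primitive_interval
      (f := fun s' => Real.exp (s'/p) * v s') (a := 0) (b := t) (μ := volume)
      (by rwa [Set.uIcc_of_le ht])
    rwa [Set.uIcc_of_le ht] at this
  have : ContinuousOn (fun σ => Real.exp (-σ/p) *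
      ((Real.exp (t/p) * y + ∫ s' in (0:ℝ)..t, Real.exp (s'/p) * v s')
        - ∫ s' in (0:ℝ)..σ, Real.exp (s'/p) * v s')) (Set.Icc 0 t) :=
    ((Real.continuous_exp.comp ((continuous_id.neg).div_const p)).continuousOn).mul
      (continuousOn_const.sub hprim)
  exact ContinuousOn.congr this (fun σ hσ => traj_sub ht hv hσ)

lemma traj_hasDeriv (ht : 0 ≤ t) (hv : ContinuousOn v (Set.Icc 0 t)) {σ : ℝ}
    (hσ : σ ∈ Set.Ioo 0 t) :
    HasDerivAt (traj p y t v) (-(traj p y t v σ)/p - v σ) σ := by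
  set g0 : ℝ → ℝ := fun s' => Real.exp (s'/p) * v s' with hg0
  set C0 : ℝ := Real.exp (t/p) * y + ∫ s' in (0:ℝ)..t, g0 s' with hC0
  have hmemIcc : Set.Icc (0:ℝ) t ∈ 𝓝 σ := Icc_mem_nhds hσ.1 hσ.2
  have hprim : HasDerivAt (fun σ => ∫ s' in (0:ℝ)..σ, g0 s') (g0 σ) σ := by
    have i2 : IntervalIntegrable g0 volume 0 σ := by
      apply g0_ii hv
      rw [Set.uIcc_of_le hσ.1.le]
      exact Set.Icc_subset_Icc_right hσ.2.le
    have hm : StronglyMeasurableAtFilter g0 (𝓝 σ) volume :=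
      ContinuousOn.stronglyMeasurableAtFilter isOpen_Ioo
        ((g0_cont hv).mono Set.Ioo_subset_Icc_self) σ hσ
    exact intervalIntegral.integral_hasDerivAt_right i2 hm ((g0_cont hv).continuousAt hmemIcc)
  have hexp : HasDerivAt (fun σ : ℝ => Real.exp (-σ/p))
      (Real.exp (-σ/p) * (-1/p)) σ := by
    have h1 : HasDerivAt (fun σ : ℝ => -σ/p) (-1/p) σ := by
      simpa using ((hasDerivAt_id σ).neg.div_const p)
    exact h1.exp
  have hF := hexp.mul ((hasDerivAt_const σ C0).sub hprim)
  have heq : traj p y t v =ᶠ[𝓝 σ]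
      (fun σ => Real.exp (-σ/p) * (C0 - ∫ s' in (0:ℝ)..σ, g0 s')) :=
    eventuallyEq_of_mem hmemIcc (fun x hx => traj_sub ht hv hx)
  have hfin := hF.congr_of_eventuallyEq heq
  refine hfin.congr_deriv ?_
  have hexpcancel : Real.exp (-σ/p) * Real.exp (σ/p) = 1 := by
    rw [← Real.exp_add, show -σ/p + σ/p = 0 by ring, Real.exp_zero]
  have htraj : traj p y t v σ = Real.exp (-σ/p) * (C0 - ∫ s' in (0:ℝ)..σ, g0 s') :=
    traj_sub ht hv (Set.Ioo_subset_Icc_self hσ)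
  rw [htraj]
  simp only [hg0, Pi.sub_apply]
  linear_combination (-(v σ)) * hexpcancel

lemma traj_ge (hp : 0 < p) (hy : 0 ≤ y)
    (hvpos : ∀ s ∈ Set.Icc 0 t, 0 ≤ v s) {σ : ℝ} (hσ : σ ∈ Set.Icc 0 t) :
    y ≤ traj p y t v σ := by
  have hint : 0 ≤ ∫ s' in σ..t, Real.exp ((s' - σ)/p) * v s' := by
    apply intervalIntegral.integral_nonneg hσ.2
    intro u hu
    exact mul_nonneg (Real.exp_nonneg _) (hvpos u ⟨le_trans hσ.1 hu.1, hu.2⟩)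
  have hexp1 : (1:ℝ) ≤ Real.exp ((t - σ)/p) :=
    Real.one_le_exp (div_nonneg (by linarith [hσ.2]) hp.le)
  unfold traj
  nlinarith

end TrajInfra


lemma sign_ii (p y θ Z w hZ hu hζ a b c S : ℝ)
    (hp : 0 < p) (hy : 0 < y) (hθ0 : 0 < θ) (hθ1 : θ ≤ 1) (hZ0 : 0 < Z)
    (hw : 1 ≤ w)
    (ha : a ≤ 0) (hb : b ≤ 0) (hc : c ≤ 0)
    (hhZ : 0 ≤ hZ) (hhζ : 0 ≤ hζ)
    (htang : w * hu ≥ w * hZ - (w - 1) * Z * a)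
    (hxg : b ≤ w * a)
    (hS : S ≤ 0) (hSle : -S ≤ (hZ - hζ)/(Z+p)) :
    (θ/p) * (hZ - w * hu) + (1+y/p) * (b - a)
      + ((y+p)*(w-1)/(Z+p)) * (c - a) + θ*(1-w)*S ≤ 0 := by
  have hZp : (0:ℝ) < Z + p := by linarith
  have hSle' : -S * (Z+p) ≤ hZ - hζ := by
    rw [← le_div_iff₀ hZp]; exact hSle
  have hrw : (θ/p) * (hZ - w * hu) + (1+y/p) * (b - a)
      + ((y+p)*(w-1)/(Z+p)) * (c - a) + θ*(1-w)*S
      = (θ*(Z+p)*(hZ - w*hu) + (p+y)*(Z+p)*(b-a) + p*(y+p)*(w-1)*(c-a)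
          + θ*(1-w)*S*(p*(Z+p))) / (p*(Z+p)) := by
    field_simp
  rw [hrw]
  apply div_nonpos_of_nonpos_of_nonneg _ (by positivity)
  have k1 : θ*(Z+p)*(hZ - w*hu) ≤ θ*(Z+p)*((w-1)*(Z*a-hZ)) := by
    apply mul_le_mul_of_nonneg_left _ (by positivity)
    nlinarith
  have k2 : (p+y)*(Z+p)*(b-a) ≤ (p+y)*(Z+p)*((w-1)*a) := by
    apply mul_le_mul_of_nonneg_left _ (by positivity)
    nlinarith
  have hw1 : (0:ℝ) ≤ w - 1 := by linarith
  have hyp' : (0:ℝ) ≤ y + p := by linarith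
  have k3 : p*(y+p)*(w-1)*(c-a) ≤ p*(y+p)*(w-1)*(-a) := by
    apply mul_le_mul_of_nonneg_left _ (by positivity)
    linarith
  have k4 : θ*(1-w)*S*(p*(Z+p)) ≤ θ*(w-1)*p*hZ := by
    have hco : (0:ℝ) ≤ θ*(w-1)*p := by positivity
    have : θ*(1-w)*S*(p*(Z+p)) = (θ*(w-1)*p)*(-S*(Z+p)) := by ring
    rw [this]
    calc (θ*(w-1)*p)*(-S*(Z+p)) ≤ (θ*(w-1)*p)*(hZ - hζ) := by
          apply mul_le_mul_of_nonneg_left hSle' hco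
      _ ≤ θ*(w-1)*p*hZ := by
          apply le_trans (mul_le_mul_of_nonneg_left (by linarith : hZ - hζ ≤ hZ) hco)
          apply le_of_eq; ring
  nlinarith [mul_nonneg (sub_nonneg.2 hw) (mul_nonneg (mul_nonneg hθ0.le hZ0.le) (neg_nonneg.2 ha)),
    mul_nonneg (sub_nonneg.2 hw) (mul_nonneg hθ0.le hhZ),
    mul_nonneg (sub_nonneg.2 hw) (neg_nonneg.2 ha),
    mul_pos hy hZ0, mul_pos hZ0 hp]

lemma sign_i (p y θ Z w hZ hu hζ a b c S : ℝ)
    (hp : 0 < p) (hy : 0 < y) (hθ0 : 0 < θ) (hθ1 : θ ≤ 1) (hZ0 : 0 < Z)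
    (hw0 : 0 < w) (hw : w ≤ 1)
    (ha : a ≤ 0) (hb : b ≤ 0) (hc : c ≤ 0)
    (hhZ : 0 ≤ hZ) (hhu : 0 ≤ hu) (hhζ : 0 ≤ hζ)
    (hhu_le : hu ≤ hZ)
    (hxg : w * a ≤ b)
    (hca : a ≤ c)
    (hS : S ≤ 0) (hSle : -S ≤ (hZ - hζ)/(Z+p)) :
    0 ≤ (θ/p) * (hZ - w * hu) + (1+y/p) * (b - a)
      + ((y+p)*(w-1)/(Z+p)) * (c - a) + θ*(1-w)*S := by
  have hZp : (0:ℝ) < Z + p := by linarith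
  have hSle' : -S * (Z+p) ≤ hZ - hζ := by
    rw [← le_div_iff₀ hZp]; exact hSle
  have hrw : (θ/p) * (hZ - w * hu) + (1+y/p) * (b - a)
      + ((y+p)*(w-1)/(Z+p)) * (c - a) + θ*(1-w)*S
      = (θ*(Z+p)*(hZ - w*hu) + (p+y)*(Z+p)*(b-a) + p*(y+p)*(w-1)*(c-a)
          + θ*(1-w)*S*(p*(Z+p))) / (p*(Z+p)) := by
    field_simp
  rw [hrw]
  apply div_nonneg _ (by positivity)
  -- lower bounds
  have k2 : (p+y)*(Z+p)*(b-a) ≥ (p+y)*(Z+p)*((1-w)*(-a)) := by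
    apply mul_le_mul_of_nonneg_left _ (by positivity)
    nlinarith
  have h1w : (0:ℝ) ≤ 1 - w := by linarith
  have hyp' : (0:ℝ) ≤ y + p := by linarith
  have k3 : p*(y+p)*(w-1)*(c-a) ≥ -(p*(y+p)*(1-w)*(-a)) := by
    nlinarith [mul_nonneg (mul_nonneg hp.le hyp') (mul_nonneg h1w (neg_nonneg.2 hc))]
  have k4 : θ*(1-w)*S*(p*(Z+p)) ≥ -(θ*(1-w)*p*hZ) := by
    have hco : (0:ℝ) ≤ θ*(1-w)*p := by positivity
    have h1 : θ*(1-w)*S*(p*(Z+p)) = -((θ*(1-w)*p)*(-S*(Z+p))) := by ring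
    rw [h1]
    have h2 : (θ*(1-w)*p)*(-S*(Z+p)) ≤ (θ*(1-w)*p)*hZ := by
      calc (θ*(1-w)*p)*(-S*(Z+p)) ≤ (θ*(1-w)*p)*(hZ - hζ) :=
            mul_le_mul_of_nonneg_left hSle' hco
        _ ≤ (θ*(1-w)*p)*hZ := mul_le_mul_of_nonneg_left (by linarith) hco
    linarith
  -- main: θ(Z+p)(hZ - w hu) + (p+y)(Z+p)(1-w)(-a) - p(y+p)(1-w)(-a) - θ(1-w)p hZ ≥ 0
  -- = θ(Z+p)(hZ - w hu) + (1-w)(-a)(y+p)Z - θ(1-w)p hZ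
  -- hZ - w hu ≥ (1-w) hZ  (since w*hu ≤ w*hZ)
  have k1 : θ*(Z+p)*(hZ - w*hu) ≥ θ*(Z+p)*((1-w)*hZ) := by
    apply mul_le_mul_of_nonneg_left _ (by positivity)
    nlinarith
  -- and θ(Z+p)(1-w)hZ - θ(1-w)p hZ = θ(1-w)Z hZ ≥ 0; (1-w)(-a)(y+p)Z ≥ 0
  nlinarith [mul_nonneg (mul_nonneg hθ0.le (by linarith : (0:ℝ) ≤ 1-w)) (mul_nonneg hZ0.le hhZ),
    mul_nonneg (mul_nonneg (by linarith : (0:ℝ) ≤ 1-w) (neg_nonneg.2 ha)) (mul_nonneg (by linarith : (0:ℝ) ≤ y+p) hZ0.le)]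

/-! ### The auxiliary functional N -/

noncomputable def Iv (p t y : ℝ) (h v : ℝ → ℝ) (s : ℝ) : ℝ :=
  (1/p) * (h (traj p y t v s / v s) * Real.exp (-(t - s)/p) * v s)
    - (1 + y/p) * deriv h (traj p y t v s / v s)

noncomputable def Qq (p : ℝ) (h : ℝ → ℝ) (b x : ℝ) : ℝ :=
  ∫ ξ in b..x, deriv h ξ / (ξ + p)

noncomputable def NN (p t y : ℝ) (h v : ℝ → ℝ) (σ : ℝ) : ℝ :=
  ((∫ s in (0:ℝ)..t, Iv p t y h v s) - ∫ s in (0:ℝ)..σ, Iv p t y h v s)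
  + Real.exp (-(t - σ)/p) * h (traj p y t v σ)
  - Real.exp (-t/p) * h ((traj p y t v σ + p) * Real.exp (σ/p) - p)
  + (Real.exp (-(t - σ)/p) * (traj p y t v σ + p) - (y + p)) *
      (Qq p h y ((traj p y t v σ + p) * Real.exp (σ/p) - p) - Qq p h y (traj p y t v σ))

noncomputable def EE (p t y : ℝ) (h v : ℝ → ℝ) (σ : ℝ) : ℝ :=
  (Real.exp (-(t - σ)/p)/p) * (h (traj p y t v σ) - v σ * h (traj p y t v σ / v σ))
  + (1 + y/p) * (deriv h (traj p y t v σ / v σ) - deriv h (traj p y t v σ))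
  + ((y+p)*(v σ - 1)/(traj p y t v σ + p)) *
      (deriv h ((traj p y t v σ + p) * Real.exp (σ/p) - p) - deriv h (traj p y t v σ))
  + Real.exp (-(t - σ)/p) * (1 - v σ) *
      (Qq p h y ((traj p y t v σ + p) * Real.exp (σ/p) - p) - Qq p h y (traj p y t v σ))

section QInfra
variable {p : ℝ} {h : ℝ → ℝ}

lemma q_contOn (hp : 0 < p) (hh2 : ContDiffOn ℝ 2 h (Set.Ioi 0)) :
    ContinuousOn (fun ξ => deriv h ξ / (ξ + p)) (Set.Ioi 0) := by
  apply (hd_cont hh2).div (continuousOn_id.add continuousOn_const)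
  intro x hx
  have hx' : (0:ℝ) < x := hx
  have : (0:ℝ) < x + p := by linarith
  simpa using ne_of_gt this

lemma q_intble (hp : 0 < p) (hh2 : ContDiffOn ℝ 2 h (Set.Ioi 0)) {a b : ℝ}
    (ha : 0 < a) (hb : 0 < b) :
    IntervalIntegrable (fun ξ => deriv h ξ / (ξ + p)) volume a b := by
  apply ContinuousOn.intervalIntegrable
  apply (q_contOn hp hh2).mono
  intro x hx
  have := hx.1
  simp only [Set.mem_Ioi]
  calc (0:ℝ) < min a b := lt_min ha hb
    _ ≤ x := hx.1

lemma Qq_hasDeriv (hp : 0 < p) (hh2 : ContDiffOn ℝ 2 h (Set.Ioi 0)) {b x : ℝ}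
    (hb : 0 < b) (hx : 0 < x) :
    HasDerivAt (Qq p h b) (deriv h x / (x + p)) x := by
  apply intervalIntegral.integral_hasDerivAt_right (q_intble hp hh2 hb hx)
  · exact ContinuousOn.stronglyMeasurableAtFilter isOpen_Ioi (q_contOn hp hh2) x hx
  · exact (q_contOn hp hh2).continuousAt (Ioi_mem_nhds hx)

lemma Qq_sub (hp : 0 < p) (hh2 : ContDiffOn ℝ 2 h (Set.Ioi 0)) {b a c : ℝ}
    (hb : 0 < b) (ha : 0 < a) (hc : 0 < c) :
    Qq p h b c - Qq p h b a = ∫ ξ in a..c, deriv h ξ / (ξ + p) :=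
  intervalIntegral.integral_interval_sub_left (q_intble hp hh2 hb hc) (q_intble hp hh2 hb ha)

end QInfra

section NInfra
variable {p t y : ℝ} {h v : ℝ → ℝ}

lemma u_cont (hp : 0 < p) (hy : 0 < y) (ht : 0 ≤ t) (hv : ContinuousOn v (Set.Icc 0 t))
    (hvpos : ∀ s ∈ Set.Icc 0 t, 0 < v s) :
    ContinuousOn (fun s => traj p y t v s / v s) (Set.Icc 0 t) :=
  (traj_contOn ht hv).div hv (fun s hs => ne_of_gt (hvpos s hs))

lemma u_pos (hp : 0 < p) (ht : 0 ≤ t) (hy : 0 < y)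
    (hvpos : ∀ s ∈ Set.Icc 0 t, 0 < v s) {s : ℝ} (hs : s ∈ Set.Icc 0 t) :
    0 < traj p y t v s / v s := by
  apply div_pos _ (hvpos s hs)
  have := traj_ge (v := v) hp hy.le (fun s hs => (hvpos s hs).le) hs
  linarith

lemma traj_pos (hp : 0 < p) (hy : 0 < y)
    (hvpos : ∀ s ∈ Set.Icc 0 t, 0 < v s) {s : ℝ} (hs : s ∈ Set.Icc 0 t) :
    0 < traj p y t v s := by
  have := traj_ge (v := v) hp hy.le (fun s hs => (hvpos s hs).le) hs
  linarith

lemma f1_cont (hp : 0 < p) (hy : 0 < y) (hh2 : ContDiffOn ℝ 2 h (Set.Ioi 0))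
    (ht : 0 ≤ t) (hv : ContinuousOn v (Set.Icc 0 t))
    (hvpos : ∀ s ∈ Set.Icc 0 t, 0 < v s) :
    ContinuousOn (fun s => h (traj p y t v s / v s) * Real.exp (-(t - s)/p) * v s)
      (Set.Icc 0 t) := by
  apply ContinuousOn.mul _ hv
  apply ContinuousOn.mul
  · exact hh2.continuousOn.comp (u_cont hp hy ht hv hvpos)
      (fun s hs => u_pos hp ht hy hvpos hs)
  · exact (Real.continuous_exp.comp (by continuity)).continuousOn

lemma f2_cont (hp : 0 < p) (hy : 0 < y) (hh2 : ContDiffOn ℝ 2 h (Set.Ioi 0))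
    (ht : 0 ≤ t) (hv : ContinuousOn v (Set.Icc 0 t))
    (hvpos : ∀ s ∈ Set.Icc 0 t, 0 < v s) :
    ContinuousOn (fun s => deriv h (traj p y t v s / v s)) (Set.Icc 0 t) :=
  (hd_cont hh2).comp (u_cont hp hy ht hv hvpos) (fun s hs => u_pos hp ht hy hvpos hs)

lemma Iv_cont (hp : 0 < p) (hy : 0 < y) (hh2 : ContDiffOn ℝ 2 h (Set.Ioi 0))
    (ht : 0 ≤ t) (hv : ContinuousOn v (Set.Icc 0 t))
    (hvpos : ∀ s ∈ Set.Icc 0 t, 0 < v s) :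
    ContinuousOn (Iv p t y h v) (Set.Icc 0 t) := by
  unfold Iv
  exact (continuousOn_const.mul (f1_cont hp hy hh2 ht hv hvpos)).sub
    (continuousOn_const.mul (f2_cont hp hy hh2 ht hv hvpos))

lemma Ffun_eq (hp : 0 < p) (hy : 0 < y) (hh2 : ContDiffOn ℝ 2 h (Set.Ioi 0))
    (ht : 0 ≤ t) (hv : ContinuousOn v (Set.Icc 0 t))
    (hvpos : ∀ s ∈ Set.Icc 0 t, 0 < v s) :
    Ffun p h t y v = ∫ s in (0:ℝ)..t, Iv p t y h v s := by
  have i1 : IntervalIntegrable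
      (fun s => (1/p) * (h (traj p y t v s / v s) * Real.exp (-(t - s)/p) * v s))
      volume 0 t :=
    ((continuousOn_const.mul (f1_cont hp hy hh2 ht hv hvpos)).mono
      (by rw [Set.uIcc_of_le ht])).intervalIntegrable
  have i2 : IntervalIntegrable
      (fun s => (1 + y/p) * deriv h (traj p y t v s / v s)) volume 0 t :=
    ((continuousOn_const.mul (f2_cont hp hy hh2 ht hv hvpos)).mono
      (by rw [Set.uIcc_of_le ht])).intervalIntegrable
  unfold Ffun Iv
  rw [intervalIntegral.integral_sub i1 i2, intervalIntegral.integral_const_mul,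
    intervalIntegral.integral_const_mul]

lemma NN_zero (hp : 0 < p) (hy : 0 < y) (hh2 : ContDiffOn ℝ 2 h (Set.Ioi 0))
    (ht : 0 ≤ t) (hv : ContinuousOn v (Set.Icc 0 t))
    (hvpos : ∀ s ∈ Set.Icc 0 t, 0 < v s) :
    NN p t y h v 0 = Ffun p h t y v := by
  unfold NN
  rw [Ffun_eq hp hy hh2 ht hv hvpos]
  simp [Real.exp_zero, sub_zero, zero_div, add_sub_cancel_right]

lemma NN_t (hp : 0 < p) : NN p t y h v t
    = h y - Real.exp (-t/p) * h ((y+p) * Real.exp (t/p) - p) := by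
  have htraj : traj p y t v t = y := by
    unfold traj
    simp [sub_self, zero_div, Real.exp_zero, intervalIntegral.integral_same]
  unfold NN
  rw [htraj]
  simp [sub_self, zero_div, Real.exp_zero]

end NInfra

section NDeriv
variable {p t y : ℝ} {h v : ℝ → ℝ}

lemma NN_hasDeriv (hp : 0 < p) (ht : 0 < t) (hy : 0 < y)
    (hh2 : ContDiffOn ℝ 2 h (Set.Ioi 0))
    (hv : ContinuousOn v (Set.Icc 0 t)) (hvpos : ∀ s ∈ Set.Icc 0 t, 0 < v s)
    {σ : ℝ} (hσ : σ ∈ Set.Ioo 0 t) :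
    HasDerivAt (NN p t y h v) (EE p t y h v σ) σ := by
  have hσIcc : σ ∈ Set.Icc 0 t := Set.Ioo_subset_Icc_self hσ
  have hmem : Set.Icc (0:ℝ) t ∈ 𝓝 σ := Icc_mem_nhds hσ.1 hσ.2
  have hvσ : 0 < v σ := hvpos σ hσIcc
  have hZpos : 0 < traj p y t v σ := traj_pos hp hy hvpos hσIcc
  have hupos : 0 < traj p y t v σ / v σ := u_pos hp ht.le hy hvpos hσIcc
  have hE1 : 1 ≤ Real.exp (σ/p) := Real.one_le_exp (div_nonneg hσ.1.le hp.le)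
  have hζpos : 0 < (traj p y t v σ + p) * Real.exp (σ/p) - p := by nlinarith
  have hZ' : HasDerivAt (traj p y t v) (-(traj p y t v σ)/p - v σ) σ :=
    traj_hasDeriv ht.le hv hσ
  -- derivative of the integral term
  have d0 : HasDerivAt (fun σ => ∫ s in (0:ℝ)..σ, Iv p t y h v s)
      (Iv p t y h v σ) σ := by
    have i1 : IntervalIntegrable (Iv p t y h v) volume 0 σ :=
      ((Iv_cont hp hy hh2 ht.le hv hvpos).mono
        (by rw [Set.uIcc_of_le hσ.1.le]; exact Set.Icc_subset_Icc_right hσ.2.le)).intervalIntegrable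
    exact intervalIntegral.integral_hasDerivAt_right i1
      (ContinuousOn.stronglyMeasurableAtFilter isOpen_Ioo
        ((Iv_cont hp hy hh2 ht.le hv hvpos).mono Set.Ioo_subset_Icc_self) σ hσ)
      ((Iv_cont hp hy hh2 ht.le hv hvpos).continuousAt hmem)
  have dθ : HasDerivAt (fun σ => Real.exp (-(t - σ)/p))
      (Real.exp (-(t - σ)/p) * (1/p)) σ := by
    have inner : HasDerivAt (fun σ : ℝ => -(t - σ)/p) (1/p) σ := by
      have := (((hasDerivAt_const σ t).sub (hasDerivAt_id σ)).neg.div_const p)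
      simpa using this
    exact inner.exp
  have dE : HasDerivAt (fun σ : ℝ => Real.exp (σ/p)) (Real.exp (σ/p) * (1/p)) σ := by
    have inner : HasDerivAt (fun σ : ℝ => σ/p) (1/p) σ := by
      simpa using ((hasDerivAt_id σ).div_const p)
    exact inner.exp
  have dhZ : HasDerivAt (fun σ => h (traj p y t v σ))
      (deriv h (traj p y t v σ) * (-(traj p y t v σ)/p - v σ)) σ :=
    (h_hasDeriv hh2 hZpos).comp σ hZ'
  have dζ : HasDerivAt (fun σ => (traj p y t v σ + p) * Real.exp (σ/p) - p)
      ((-(traj p y t v σ)/p - v σ) * Real.exp (σ/p)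
        + (traj p y t v σ + p) * (Real.exp (σ/p) * (1/p))) σ :=
    ((hZ'.add_const p).mul dE).sub_const p
  have dhζ : HasDerivAt (fun σ => h ((traj p y t v σ + p) * Real.exp (σ/p) - p))
      (deriv h ((traj p y t v σ + p) * Real.exp (σ/p) - p)
        * ((-(traj p y t v σ)/p - v σ) * Real.exp (σ/p)
          + (traj p y t v σ + p) * (Real.exp (σ/p) * (1/p)))) σ :=
    (h_hasDeriv hh2 hζpos).comp σ dζ
  have dQζ : HasDerivAt (fun σ => Qq p h y ((traj p y t v σ + p) * Real.exp (σ/p) - p))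
      (deriv h ((traj p y t v σ + p) * Real.exp (σ/p) - p)
          / ((traj p y t v σ + p) * Real.exp (σ/p) - p + p)
        * ((-(traj p y t v σ)/p - v σ) * Real.exp (σ/p)
          + (traj p y t v σ + p) * (Real.exp (σ/p) * (1/p)))) σ :=
    by have := (Qq_hasDeriv hp hh2 hy hζpos).comp σ dζ; exact this
  have dQZ : HasDerivAt (fun σ => Qq p h y (traj p y t v σ))
      (deriv h (traj p y t v σ) / (traj p y t v σ + p)
        * (-(traj p y t v σ)/p - v σ)) σ :=
    (Qq_hasDeriv hp hh2 hy hZpos).comp σ hZ'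
  have dcoef : HasDerivAt
      (fun σ => Real.exp (-(t - σ)/p) * (traj p y t v σ + p) - (y + p))
      (Real.exp (-(t - σ)/p) * (1/p) * (traj p y t v σ + p)
        + Real.exp (-(t - σ)/p) * (-(traj p y t v σ)/p - v σ)) σ :=
    (dθ.mul (hZ'.add_const p)).sub_const (y + p)
  have BIG := ((((hasDerivAt_const σ (∫ s in (0:ℝ)..t, Iv p t y h v s)).sub d0).add
      (dθ.mul dhZ)).sub (dhζ.const_mul (Real.exp (-t/p)))).add
      (dcoef.mul (dQζ.sub dQZ))
  have hNN : NN p t y h v = fun σ =>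
      (((∫ s in (0:ℝ)..t, Iv p t y h v s) - ∫ s in (0:ℝ)..σ, Iv p t y h v s)
        + Real.exp (-(t - σ)/p) * h (traj p y t v σ))
      - Real.exp (-t/p) * h ((traj p y t v σ + p) * Real.exp (σ/p) - p)
      + (Real.exp (-(t - σ)/p) * (traj p y t v σ + p) - (y + p)) *
          (Qq p h y ((traj p y t v σ + p) * Real.exp (σ/p) - p)
            - Qq p h y (traj p y t v σ)) := by
    funext σ; unfold NN; ring
  rw [hNN]
  refine BIG.congr_deriv ?_
  -- value identity
  have hXE : Real.exp (-t/p) * Real.exp (σ/p) = Real.exp (-(t - σ)/p) := by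
    rw [← Real.exp_add]; congr 1; ring
  have hX : Real.exp (-t/p) = Real.exp (-(t - σ)/p) / Real.exp (σ/p) := by
    rw [eq_div_iff (ne_of_gt (Real.exp_pos _))]; exact hXE
  unfold EE Iv
  simp only [Pi.sub_apply]
  rw [hX]
  have hEne : Real.exp (σ/p) ≠ 0 := ne_of_gt (Real.exp_pos _)
  have hZpne : traj p y t v σ + p ≠ 0 := by positivity
  have hζpne : (traj p y t v σ + p) * Real.exp (σ/p) - p + p ≠ 0 := by
    have : (traj p y t v σ + p) * Real.exp (σ/p) - p + p
        = (traj p y t v σ + p) * Real.exp (σ/p) := by ring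
    rw [this]; positivity
  field_simp
  ring

lemma tangent_ge {h : ℝ → ℝ} (hh2 : ContDiffOn ℝ 2 h (Set.Ioi 0))
    (hhconv : ConvexOn ℝ (Set.Ioi 0) h) {x₁ x₂ : ℝ} (h1 : 0 < x₁) (h12 : x₁ ≤ x₂) :
    h x₂ + deriv h x₂ * (x₁ - x₂) ≤ h x₁ := by
  rcases eq_or_lt_of_le h12 with rfl | hlt
  · simp
  · have h2 : (0:ℝ) < x₂ := lt_trans h1 hlt
    have hs := hhconv.slope_le_deriv (Set.mem_Ioi.2 h1) (Set.mem_Ioi.2 h2) hlt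
      ((hh2.differentiableOn (by norm_num)).differentiableAt (Ioi_mem_nhds h2))
    rw [slope_def_field] at hs
    have hpos : 0 < x₂ - x₁ := by linarith
    rw [div_le_iff₀ hpos] at hs
    nlinarith

section EESign
variable {p t y : ℝ} {h v : ℝ → ℝ}

lemma EE_facts (hp : 0 < p) (ht : 0 < t) (hy : 0 < y)
    (hh2 : ContDiffOn ℝ 2 h (Set.Ioi 0))
    (hhnonneg : ∀ z > (0:ℝ), 0 ≤ h z)
    (hhdec : AntitoneOn h (Set.Ioi 0))
    (hv : ContinuousOn v (Set.Icc 0 t)) (hvpos : ∀ s ∈ Set.Icc 0 t, 0 < v s)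
    {σ : ℝ} (hσ : σ ∈ Set.Ioo 0 t) :
    let Z := traj p y t v σ
    let ζ := (Z + p) * Real.exp (σ/p) - p
    0 < Z ∧ Z ≤ ζ ∧ 0 < ζ ∧
      (Qq p h y ζ - Qq p h y Z ≤ 0) ∧
      (-(Qq p h y ζ - Qq p h y Z) ≤ (h Z - h ζ)/(Z + p)) := by
  intro Z ζ
  have hσIcc : σ ∈ Set.Icc 0 t := Set.Ioo_subset_Icc_self hσ
  have hZpos : 0 < Z := traj_pos hp hy hvpos hσIcc
  have hE1 : 1 ≤ Real.exp (σ/p) := Real.one_le_exp (div_nonneg hσ.1.le hp.le)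
  have hZζ : Z ≤ ζ := by
    have : (Z + p) * 1 ≤ (Z + p) * Real.exp (σ/p) :=
      mul_le_mul_of_nonneg_left hE1 (by linarith)
    simp only [ζ]; nlinarith
  have hζpos : 0 < ζ := lt_of_lt_of_le hZpos hZζ
  have hZp : (0:ℝ) < Z + p := by linarith
  have hqnonpos : ∀ ξ ∈ Set.Icc Z ζ, deriv h ξ / (ξ + p) ≤ 0 := by
    intro ξ hξ
    have hξpos : 0 < ξ := lt_of_lt_of_le hZpos hξ.1
    exact div_nonpos_of_nonpos_of_nonneg (hd_nonpos hh2 hhdec hξpos) (by linarith)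
  have hSval : Qq p h y ζ - Qq p h y Z = ∫ ξ in Z..ζ, deriv h ξ/(ξ + p) :=
    Qq_sub hp hh2 hy hZpos hζpos
  have hsubI : Set.uIcc Z ζ ⊆ Set.Ioi 0 := by
    rw [Set.uIcc_of_le hZζ]; intro x hx; exact lt_of_lt_of_le hZpos hx.1
  have hnegint : (0:ℝ) ≤ ∫ ξ in Z..ζ, -(deriv h ξ/(ξ + p)) := by
    apply intervalIntegral.integral_nonneg hZζ
    intro ξ hξ; linarith [hqnonpos ξ hξ]
  have hiq : IntervalIntegrable (fun ξ => deriv h ξ/(ξ + p)) volume Z ζ :=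
    q_intble hp hh2 hZpos hζpos
  have hS : Qq p h y ζ - Qq p h y Z ≤ 0 := by
    rw [hSval]
    rw [intervalIntegral.integral_neg] at hnegint
    linarith
  have hFTC : ∫ ξ in Z..ζ, deriv h ξ = h ζ - h Z := by
    apply intervalIntegral.integral_eq_sub_of_hasDerivAt
    · intro x hx; exact h_hasDeriv hh2 (hsubI hx)
    · exact ((hd_cont hh2).mono hsubI).intervalIntegrable
  have hmono2 : (∫ ξ in Z..ζ, -(deriv h ξ/(ξ + p)))
      ≤ ∫ ξ in Z..ζ, (-(deriv h ξ))/(Z + p) := by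
    apply intervalIntegral.integral_mono_on hZζ (hiq.neg)
    · apply IntervalIntegrable.div_const
      exact (((hd_cont hh2).mono hsubI).intervalIntegrable).neg
    · intro ξ hξ
      have hξpos : 0 < ξ := lt_of_lt_of_le hZpos hξ.1
      have hd : (0:ℝ) ≤ -(deriv h ξ) := neg_nonneg.2 (hd_nonpos hh2 hhdec hξpos)
      simp only [Pi.neg_apply]
      rw [← neg_div]
      exact div_le_div_of_nonneg_left hd hZp (by linarith [hξ.1])
  have hdiv : (∫ ξ in Z..ζ, (-(deriv h ξ))/(Z + p)) = (h Z - h ζ)/(Z + p) := by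
    rw [intervalIntegral.integral_div, intervalIntegral.integral_neg, hFTC]
    ring
  have hSle : -(Qq p h y ζ - Qq p h y Z) ≤ (h Z - h ζ)/(Z + p) := by
    have e1 : -(Qq p h y ζ - Qq p h y Z) = ∫ ξ in Z..ζ, -(deriv h ξ/(ξ + p)) := by
      rw [hSval, ← intervalIntegral.integral_neg]
    rw [e1]
    calc (∫ ξ in Z..ζ, -(deriv h ξ/(ξ + p)))
        ≤ ∫ ξ in Z..ζ, (-(deriv h ξ))/(Z + p) := hmono2
      _ = (h Z - h ζ)/(Z + p) := hdiv
  exact ⟨hZpos, hZζ, hζpos, hS, hSle⟩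

lemma EE_nonpos (hp : 0 < p) (ht : 0 < t) (hy : 0 < y)
    (hh2 : ContDiffOn ℝ 2 h (Set.Ioi 0))
    (hhnonneg : ∀ z > (0:ℝ), 0 ≤ h z)
    (hhdec : AntitoneOn h (Set.Ioi 0))
    (hhconv : ConvexOn ℝ (Set.Ioi 0) h)
    (hineq : ∀ z > (0:ℝ), 0 ≤ z * iteratedDeriv 2 h z + deriv h z)
    (hv : ContinuousOn v (Set.Icc 0 t)) (hvge : ∀ s ∈ Set.Icc 0 t, 1 ≤ v s)
    {σ : ℝ} (hσ : σ ∈ Set.Ioo 0 t) : EE p t y h v σ ≤ 0 := by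
  have hvpos : ∀ s ∈ Set.Icc 0 t, 0 < v s :=
    fun s hs => lt_of_lt_of_le one_pos (hvge s hs)
  obtain ⟨hZpos, hZζ, hζpos, hS, hSle⟩ :=
    EE_facts hp ht hy hh2 hhnonneg hhdec hv hvpos hσ
  have hσIcc : σ ∈ Set.Icc 0 t := Set.Ioo_subset_Icc_self hσ
  have hw : 1 ≤ v σ := hvge σ hσIcc
  have hvσ : 0 < v σ := lt_of_lt_of_le one_pos hw
  set Z := traj p y t v σ with hZdef
  set ζ := (Z + p) * Real.exp (σ/p) - p with hζdef
  set w := v σ with hwdef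
  have hu0pos : 0 < Z / w := div_pos hZpos hvσ
  have hu0le : Z / w ≤ Z := div_le_self hZpos.le hw
  have ha : deriv h Z ≤ 0 := hd_nonpos hh2 hhdec hZpos
  have hb : deriv h (Z / w) ≤ 0 := hd_nonpos hh2 hhdec hu0pos
  have hc : deriv h ζ ≤ 0 := hd_nonpos hh2 hhdec hζpos
  have hcancel : w * (Z / w) = Z := by field_simp
  have htang : w * h (Z / w) ≥ w * h Z - (w - 1) * Z * deriv h Z := by
    have e : w * (h Z + deriv h Z * (Z/w - Z)) = w * h Z - (w - 1) * Z * deriv h Z := by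
      linear_combination deriv h Z * hcancel
    have := mul_le_mul_of_nonneg_left (tangent_ge hh2 hhconv hu0pos hu0le)
      (by linarith : (0:ℝ) ≤ w)
    linarith [e ▸ this]
  have hxg : deriv h (Z / w) ≤ w * deriv h Z := by
    have hmono := xdh_mono hh2 hineq (Set.mem_Ioi.2 hu0pos) (Set.mem_Ioi.2 hZpos) hu0le
    simp only at hmono
    have h1 : w * (Z / w * deriv h (Z / w)) ≤ w * (Z * deriv h Z) :=
      mul_le_mul_of_nonneg_left hmono (by linarith)
    have h2 : Z * deriv h (Z / w) ≤ Z * (w * deriv h Z) := by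
      nlinarith [hcancel]
    exact le_of_mul_le_mul_left (by linarith) hZpos
  have hθ0 : 0 < Real.exp (-(t - σ)/p) := Real.exp_pos _
  have hθ1 : Real.exp (-(t - σ)/p) ≤ 1 := by
    have h0 : 0 ≤ (t - σ)/p := div_nonneg (by linarith [hσ.2]) hp.le
    rw [Real.exp_le_one_iff, neg_div]
    linarith
  unfold EE
  exact sign_ii p y _ Z w (h Z) (h (Z / w)) (h ζ) (deriv h Z) (deriv h (Z / w))
    (deriv h ζ) _ hp hy hθ0 hθ1 hZpos hw ha hb hc (hhnonneg Z hZpos)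
    (hhnonneg ζ hζpos) htang hxg hS hSle

lemma EE_nonneg (hp : 0 < p) (ht : 0 < t) (hy : 0 < y)
    (hh2 : ContDiffOn ℝ 2 h (Set.Ioi 0))
    (hhnonneg : ∀ z > (0:ℝ), 0 ≤ h z)
    (hhdec : AntitoneOn h (Set.Ioi 0))
    (hhconv : ConvexOn ℝ (Set.Ioi 0) h)
    (hineq : ∀ z > (0:ℝ), 0 ≤ z * iteratedDeriv 2 h z + deriv h z)
    (hv : ContinuousOn v (Set.Icc 0 t))
    (hvle : ∀ s ∈ Set.Icc 0 t, 0 < v s ∧ v s ≤ 1)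
    {σ : ℝ} (hσ : σ ∈ Set.Ioo 0 t) : 0 ≤ EE p t y h v σ := by
  have hvpos : ∀ s ∈ Set.Icc 0 t, 0 < v s := fun s hs => (hvle s hs).1
  obtain ⟨hZpos, hZζ, hζpos, hS, hSle⟩ :=
    EE_facts hp ht hy hh2 hhnonneg hhdec hv hvpos hσ
  have hσIcc : σ ∈ Set.Icc 0 t := Set.Ioo_subset_Icc_self hσ
  have hw : v σ ≤ 1 := (hvle σ hσIcc).2
  have hvσ : 0 < v σ := (hvle σ hσIcc).1
  set Z := traj p y t v σ with hZdef
  set ζ := (Z + p) * Real.exp (σ/p) - p with hζdef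
  set w := v σ with hwdef
  have hu0pos : 0 < Z / w := div_pos hZpos hvσ
  have hu0ge : Z ≤ Z / w := by
    rw [le_div_iff₀ hvσ]; nlinarith
  have ha : deriv h Z ≤ 0 := hd_nonpos hh2 hhdec hZpos
  have hb : deriv h (Z / w) ≤ 0 := hd_nonpos hh2 hhdec hu0pos
  have hc : deriv h ζ ≤ 0 := hd_nonpos hh2 hhdec hζpos
  have hcancel : w * (Z / w) = Z := by field_simp
  have hhu_le : h (Z / w) ≤ h Z :=
    hhdec (Set.mem_Ioi.2 hZpos) (Set.mem_Ioi.2 hu0pos) hu0ge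
  have hxg : w * deriv h Z ≤ deriv h (Z / w) := by
    have hmono := xdh_mono hh2 hineq (Set.mem_Ioi.2 hZpos) (Set.mem_Ioi.2 hu0pos) hu0ge
    simp only at hmono
    have h1 : w * (Z * deriv h Z) ≤ w * (Z / w * deriv h (Z / w)) :=
      mul_le_mul_of_nonneg_left hmono (by linarith)
    have h2 : Z * (w * deriv h Z) ≤ Z * deriv h (Z / w) := by
      nlinarith [hcancel]
    exact le_of_mul_le_mul_left (by linarith) hZpos
  have hca : deriv h Z ≤ deriv h ζ :=
    hd_mono hh2 hhconv (Set.mem_Ioi.2 hZpos) (Set.mem_Ioi.2 hζpos) hZζ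
  have hθ0 : 0 < Real.exp (-(t - σ)/p) := Real.exp_pos _
  have hθ1 : Real.exp (-(t - σ)/p) ≤ 1 := by
    have h0 : 0 ≤ (t - σ)/p := div_nonneg (by linarith [hσ.2]) hp.le
    rw [Real.exp_le_one_iff, neg_div]
    linarith
  unfold EE
  exact sign_i p y _ Z w (h Z) (h (Z / w)) (h ζ) (deriv h Z) (deriv h (Z / w))
    (deriv h ζ) _ hp hy hθ0 hθ1 hZpos hvσ hw ha hb hc (hhnonneg Z hZpos)
    (hhnonneg _ hu0pos) (hhnonneg ζ hζpos) hhu_le hxg hca hS hSle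

end EESign

section MainLemmas
variable {p t y : ℝ} {h v : ℝ → ℝ}

lemma NN_contOn (hp : 0 < p) (ht : 0 ≤ t) (hy : 0 < y)
    (hh2 : ContDiffOn ℝ 2 h (Set.Ioi 0))
    (hv : ContinuousOn v (Set.Icc 0 t)) (hvpos : ∀ s ∈ Set.Icc 0 t, 0 < v s) :
    ContinuousOn (NN p t y h v) (Set.Icc 0 t) := by
  have hIv : IntegrableOn (Iv p t y h v) (Set.Icc 0 t) volume :=
    (Iv_cont hp hy hh2 ht hv hvpos).integrableOn_Icc
  have c1 : ContinuousOn (fun σ => ∫ s in (0:ℝ)..σ, Iv p t y h v s) (Set.Icc 0 t) := by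
    have := intervalIntegral.continuousOn_primitive_interval
      (f := Iv p t y h v) (a := 0) (b := t) (μ := volume) (by rwa [Set.uIcc_of_le ht])
    rwa [Set.uIcc_of_le ht] at this
  have ctraj : ContinuousOn (traj p y t v) (Set.Icc 0 t) := traj_contOn ht hv
  have hZpos : ∀ σ ∈ Set.Icc 0 t, 0 < traj p y t v σ :=
    fun σ hσ => traj_pos hp hy hvpos hσ
  have cθ : ContinuousOn (fun σ : ℝ => Real.exp (-(t - σ)/p)) (Set.Icc 0 t) :=
    (Real.continuous_exp.comp (by continuity)).continuousOn
  have cE : ContinuousOn (fun σ : ℝ => Real.exp (σ/p)) (Set.Icc 0 t) :=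
    (Real.continuous_exp.comp (by continuity)).continuousOn
  have chZ : ContinuousOn (fun σ => h (traj p y t v σ)) (Set.Icc 0 t) :=
    hh2.continuousOn.comp ctraj (fun σ hσ => hZpos σ hσ)
  have cζ : ContinuousOn (fun σ => (traj p y t v σ + p) * Real.exp (σ/p) - p)
      (Set.Icc 0 t) := ((ctraj.add continuousOn_const).mul cE).sub continuousOn_const
  have hζpos : ∀ σ ∈ Set.Icc 0 t, 0 < (traj p y t v σ + p) * Real.exp (σ/p) - p := by
    intro σ hσ
    have hE1 : 1 ≤ Real.exp (σ/p) := Real.one_le_exp (div_nonneg hσ.1 hp.le)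
    nlinarith [hZpos σ hσ]
  have chζ : ContinuousOn (fun σ => h ((traj p y t v σ + p) * Real.exp (σ/p) - p))
      (Set.Icc 0 t) := hh2.continuousOn.comp cζ (fun σ hσ => hζpos σ hσ)
  have cQ : ContinuousOn (Qq p h y) (Set.Ioi 0) := fun x hx =>
    ((Qq_hasDeriv hp hh2 hy hx).continuousAt).continuousWithinAt
  have cQζ : ContinuousOn
      (fun σ => Qq p h y ((traj p y t v σ + p) * Real.exp (σ/p) - p)) (Set.Icc 0 t) :=
    cQ.comp cζ (fun σ hσ => hζpos σ hσ)
  have cQZ : ContinuousOn (fun σ => Qq p h y (traj p y t v σ)) (Set.Icc 0 t) :=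
    cQ.comp ctraj (fun σ hσ => hZpos σ hσ)
  unfold NN
  exact (((continuousOn_const.sub c1).add (cθ.mul chZ)).sub
    (continuousOn_const.mul chζ)).add
    (((cθ.mul (ctraj.add continuousOn_const)).sub continuousOn_const).mul (cQζ.sub cQZ))

lemma main_le (hp : 0 < p) (ht : 0 < t) (hy : 0 < y)
    (hh2 : ContDiffOn ℝ 2 h (Set.Ioi 0))
    (hhnonneg : ∀ z > (0:ℝ), 0 ≤ h z)
    (hhdec : AntitoneOn h (Set.Ioi 0))
    (hhconv : ConvexOn ℝ (Set.Ioi 0) h)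
    (hineq : ∀ z > (0:ℝ), 0 ≤ z * iteratedDeriv 2 h z + deriv h z)
    (hv : ContinuousOn v (Set.Icc 0 t))
    (hvle : ∀ s ∈ Set.Icc 0 t, 0 < v s ∧ v s ≤ 1) :
    Ffun p h t y v ≤ h y - Real.exp (-t/p) * h ((y+p) * Real.exp (t/p) - p) := by
  have hvpos : ∀ s ∈ Set.Icc 0 t, 0 < v s := fun s hs => (hvle s hs).1
  have hmono : MonotoneOn (NN p t y h v) (Set.Icc 0 t) := by
    apply monotoneOn_of_deriv_nonneg (convex_Icc 0 t)
      (NN_contOn hp ht.le hy hh2 hv hvpos)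
    · rw [interior_Icc]
      exact fun σ hσ =>
        (NN_hasDeriv hp ht hy hh2 hv hvpos hσ).differentiableAt.differentiableWithinAt
    · rw [interior_Icc]
      intro σ hσ
      rw [(NN_hasDeriv hp ht hy hh2 hv hvpos hσ).deriv]
      exact EE_nonneg hp ht hy hh2 hhnonneg hhdec hhconv hineq hv hvle hσ
  have h0t := hmono (Set.left_mem_Icc.2 ht.le) (Set.right_mem_Icc.2 ht.le) ht.le
  rwa [NN_zero hp hy hh2 ht.le hv hvpos, NN_t hp] at h0t

lemma main_ge (hp : 0 < p) (ht : 0 < t) (hy : 0 < y)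
    (hh2 : ContDiffOn ℝ 2 h (Set.Ioi 0))
    (hhnonneg : ∀ z > (0:ℝ), 0 ≤ h z)
    (hhdec : AntitoneOn h (Set.Ioi 0))
    (hhconv : ConvexOn ℝ (Set.Ioi 0) h)
    (hineq : ∀ z > (0:ℝ), 0 ≤ z * iteratedDeriv 2 h z + deriv h z)
    (hv : ContinuousOn v (Set.Icc 0 t))
    (hvge : ∀ s ∈ Set.Icc 0 t, 1 ≤ v s) :
    h y - Real.exp (-t/p) * h ((y+p) * Real.exp (t/p) - p) ≤ Ffun p h t y v := by
  have hvpos : ∀ s ∈ Set.Icc 0 t, 0 < v s :=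
    fun s hs => lt_of_lt_of_le one_pos (hvge s hs)
  have hanti : AntitoneOn (NN p t y h v) (Set.Icc 0 t) := by
    apply antitoneOn_of_deriv_nonpos (convex_Icc 0 t)
      (NN_contOn hp ht.le hy hh2 hv hvpos)
    · rw [interior_Icc]
      exact fun σ hσ =>
        (NN_hasDeriv hp ht hy hh2 hv hvpos hσ).differentiableAt.differentiableWithinAt
    · rw [interior_Icc]
      intro σ hσ
      rw [(NN_hasDeriv hp ht hy hh2 hv hvpos hσ).deriv]
      exact EE_nonpos hp ht hy hh2 hhnonneg hhdec hhconv hineq hv hvge hσ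
  have h0t := hanti (Set.left_mem_Icc.2 ht.le) (Set.right_mem_Icc.2 ht.le) ht.le
  rwa [NN_zero hp hy hh2 ht.le hv hvpos, NN_t hp] at h0t

lemma Ffun_one (hp : 0 < p) (ht : 0 < t) (hy : 0 < y)
    (hh2 : ContDiffOn ℝ 2 h (Set.Ioi 0))
    (hhnonneg : ∀ z > (0:ℝ), 0 ≤ h z)
    (hhdec : AntitoneOn h (Set.Ioi 0))
    (hhconv : ConvexOn ℝ (Set.Ioi 0) h)
    (hineq : ∀ z > (0:ℝ), 0 ≤ z * iteratedDeriv 2 h z + deriv h z) :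
    Ffun p h t y (fun _ => 1)
      = h y - Real.exp (-t/p) * h ((y+p) * Real.exp (t/p) - p) := by
  apply le_antisymm
  · exact main_le hp ht hy hh2 hhnonneg hhdec hhconv hineq continuousOn_const
      (fun s _ => ⟨one_pos, le_rfl⟩)
  · exact main_ge hp ht hy hh2 hhnonneg hhdec hhconv hineq continuousOn_const
      (fun s _ => le_rfl)

end MainLemmas

section FfunLConv
variable {p t y : ℝ} {h v : ℝ → ℝ}

lemma FfunL_eq (hp : 0 < p) (ht : 0 < t) (hy : 0 < y)
    (hh2 : ContDiffOn ℝ 2 h (Set.Ioi 0))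
    (hhnonneg : ∀ z > (0:ℝ), 0 ≤ h z)
    (hhdec : AntitoneOn h (Set.Ioi 0))
    (hv : ContinuousOn v (Set.Icc 0 t)) (hvpos : ∀ s ∈ Set.Icc 0 t, 0 < v s) :
    FfunL p h t y v = ENNReal.ofReal (Ffun p h t y v) := by
  have hsub : Set.Ioc (0:ℝ) t ⊆ Set.Icc 0 t := Set.Ioc_subset_Icc_self
  have hf1c : ContinuousOn
      (fun s => h (traj p y t v s / v s) * Real.exp (-(t - s)/p) * v s)
      (Set.Icc 0 t) := f1_cont hp hy hh2 ht.le hv hvpos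
  have hf1i : Integrable
      (fun s => h (traj p y t v s / v s) * Real.exp (-(t - s)/p) * v s)
      (volume.restrict (Set.Ioc 0 t)) :=
    (hf1c.integrableOn_Icc).mono_set hsub
  have hf1nn : 0 ≤ᵐ[volume.restrict (Set.Ioc 0 t)]
      (fun s => h (traj p y t v s / v s) * Real.exp (-(t - s)/p) * v s) := by
    filter_upwards [MeasureTheory.ae_restrict_mem measurableSet_Ioc] with s hs
    simp only [Pi.zero_apply]
    have hsIcc : s ∈ Set.Icc 0 t := hsub hs
    have hupos := u_pos hp ht.le hy hvpos hsIcc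
    exact mul_nonneg (mul_nonneg (hhnonneg _ hupos) (Real.exp_nonneg _))
      (hvpos s hsIcc).le
  have hf2c : ContinuousOn (fun s => -(deriv h (traj p y t v s / v s)))
      (Set.Icc 0 t) := (f2_cont hp hy hh2 ht.le hv hvpos).neg
  have hf2i : Integrable (fun s => -(deriv h (traj p y t v s / v s)))
      (volume.restrict (Set.Ioc 0 t)) := (hf2c.integrableOn_Icc).mono_set hsub
  have hf2nn : 0 ≤ᵐ[volume.restrict (Set.Ioc 0 t)]
      (fun s => -(deriv h (traj p y t v s / v s))) := by
    filter_upwards [MeasureTheory.ae_restrict_mem measurableSet_Ioc] with s hs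
    simp only [Pi.zero_apply]
    have hsIcc : s ∈ Set.Icc 0 t := hsub hs
    exact neg_nonneg.2 (hd_nonpos hh2 hhdec (u_pos hp ht.le hy hvpos hsIcc))
  have e1 : (∫⁻ s in Set.Ioc (0:ℝ) t,
      ENNReal.ofReal (h (traj p y t v s / v s) * Real.exp (-(t - s)/p) * v s))
      = ENNReal.ofReal (∫ s in Set.Ioc (0:ℝ) t,
          h (traj p y t v s / v s) * Real.exp (-(t - s)/p) * v s) :=
    (MeasureTheory.ofReal_integral_eq_lintegral_ofReal hf1i hf1nn).symm
  have e2 : (∫⁻ s in Set.Ioc (0:ℝ) t,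
      ENNReal.ofReal (-(deriv h (traj p y t v s / v s))))
      = ENNReal.ofReal (∫ s in Set.Ioc (0:ℝ) t,
          -(deriv h (traj p y t v s / v s))) :=
    (MeasureTheory.ofReal_integral_eq_lintegral_ofReal hf2i hf2nn).symm
  have i1nn : 0 ≤ ∫ s in Set.Ioc (0:ℝ) t,
      h (traj p y t v s / v s) * Real.exp (-(t - s)/p) * v s :=
    MeasureTheory.integral_nonneg_of_ae hf1nn
  have i2nn : 0 ≤ ∫ s in Set.Ioc (0:ℝ) t, -(deriv h (traj p y t v s / v s)) :=
    MeasureTheory.integral_nonneg_of_ae hf2nn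
  have hpinv : (0:ℝ) ≤ 1/p := by positivity
  have hyp' : (0:ℝ) ≤ 1 + y/p := by positivity
  unfold FfunL
  rw [e1, e2, ← ENNReal.ofReal_mul hpinv, ← ENNReal.ofReal_mul hyp',
    ← ENNReal.ofReal_add (mul_nonneg hpinv i1nn) (mul_nonneg hyp' i2nn)]
  congr 1
  unfold Ffun
  rw [intervalIntegral.integral_of_le ht.le, intervalIntegral.integral_of_le ht.le,
    MeasureTheory.integral_neg]
  ring

end FfunLConv

/-- Theorem 7.1: for h C², nonnegative, decreasing, convex with
y h''(y) + h'(y) ≥ 0 and y ↦ y²h''(y) decreasing, the functional F(t,y,·) is maximized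
over {0 < v ≤ 1} at v ≡ 1 and minimized over {v ≥ 1} at v ≡ 1. -/
theorem stmt_19 (p t y : ℝ) (hp : 0 < p) (ht : 0 < t) (hy : 0 < y)
    (h : ℝ → ℝ)
    (hh2 : ContDiffOn ℝ 2 h (Set.Ioi 0))
    (hhnonneg : ∀ z > (0:ℝ), 0 ≤ h z)
    (hhdec : AntitoneOn h (Set.Ioi 0))
    (hhconv : ConvexOn ℝ (Set.Ioi 0) h)
    (hineq : ∀ z > (0:ℝ), 0 ≤ z * iteratedDeriv 2 h z + deriv h z)
    (hz2h : AntitoneOn (fun z => z ^ 2 * iteratedDeriv 2 h z) (Set.Ioi 0)) :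
    (∀ v : ℝ → ℝ, ContinuousOn v (Set.Icc 0 t) →
      (∀ s ∈ Set.Icc 0 t, 0 < v s ∧ v s ≤ 1) →
      Ffun p h t y v ≤ Ffun p h t y (fun _ => 1)) ∧
    (∀ v : ℝ → ℝ, ContinuousOn v (Set.Icc 0 t) →
      (∀ s ∈ Set.Icc 0 t, 1 ≤ v s) →
      FfunL p h t y (fun _ => 1) ≤ FfunL p h t y v) := by
  constructor
  · intro v hv hvle
    rw [Ffun_one hp ht hy hh2 hhnonneg hhdec hhconv hineq]
    exact main_le hp ht hy hh2 hhnonneg hhdec hhconv hineq hv hvle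
  · intro v hv hvge
    have hvpos : ∀ s ∈ Set.Icc 0 t, 0 < v s :=
      fun s hs => lt_of_lt_of_le one_pos (hvge s hs)
    rw [FfunL_eq hp ht hy hh2 hhnonneg hhdec hv hvpos,
      FfunL_eq hp ht hy hh2 hhnonneg hhdec continuousOn_const
        (fun s _ => one_pos)]
    apply ENNReal.ofReal_le_ofReal
    rw [Ffun_one hp ht hy hh2 hhnonneg hhdec hhconv hineq]
    exact main_ge hp ht hy hh2 hhnonneg hhdec hhconv hineq hv hvge
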